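/- The maximal deviation ‖·‖_v is a seminorm on the real vector space of bounded self-adjoint operators on a complex Hilbert space, and ‖T‖_v = 0 if and only if T is a real scalar multiple of the identity. -/

import Mathlib

open scoped InnerProductSpace

variable {H : Type*} [NormedAddCommGroup H] [InnerProductSpace ℂ H] [CompleteSpace H]

/-- Variance of a bounded observable `T` at a vector `φ`. -/
noncomputable def observableVar (T : H →L[ℂ] H) (φ : H) : ℝ :=
  (⟪T (T φ), φ⟫_ℂ).re - ((⟪T φ, φ⟫_ℂ).re) ^ 2

/-- Maximal deviation of a bounded observable `T`. -/
noncomputable def maxDev (T : H →L[ℂ] H) : ℝ :=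
  ⨆ φ : {x : H // ‖x‖ = 1}, Real.sqrt (observableVar T φ)

namespace MaxDevAux

/-- The deviation vector. -/
noncomputable def dev (T : H →L[ℂ] H) (φ : H) : H :=
  T φ - (((⟪T φ, φ⟫_ℂ).re : ℂ)) • φ

lemma rsmul (c : ℝ) (x : H) : c • x = ((c : ℂ)) • x :=
  RCLike.real_smul_eq_coe_smul c x

lemma var_eq (T : H →L[ℂ] H) (hT : IsSelfAdjoint T) {φ : H} (hφ : ‖φ‖ = 1) :
    observableVar T φ = ‖dev T φ‖ ^ 2 := by
  have h1 : (⟪T (T φ), φ⟫_ℂ).re = ‖T φ‖ ^ 2 := by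
    have hsym := hT.isSymmetric (T φ) φ
    simp only [ContinuousLinearMap.coe_coe] at hsym
    rw [hsym]
    have := inner_self_eq_norm_sq (𝕜 := ℂ) (T φ)
    simpa [RCLike.re_to_complex] using this
  have h2 : ‖dev T φ‖ ^ 2 =
      ‖T φ‖ ^ 2 - 2 * ((⟪T φ, φ⟫_ℂ).re * (⟪T φ, φ⟫_ℂ).re)
        + ((⟪T φ, φ⟫_ℂ).re) ^ 2 * ‖φ‖ ^ 2 := by
    have hsm : (⟪T φ, (((⟪T φ, φ⟫_ℂ).re : ℂ)) • φ⟫_ℂ).re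
        = (⟪T φ, φ⟫_ℂ).re * (⟪T φ, φ⟫_ℂ).re := by
      rw [inner_smul_right]
      simp
    rw [dev, @norm_sub_sq ℂ]
    simp only [RCLike.re_to_complex]
    rw [hsm, norm_smul]
    simp [Complex.norm_real, mul_pow, sq_abs]
  rw [observableVar, h1, h2, hφ]
  ring

lemma dev_norm_le (T : H →L[ℂ] H) {φ : H} (hφ : ‖φ‖ = 1) :
    ‖dev T φ‖ ≤ 2 * ‖T‖ := by
  have h0 : ‖T φ‖ ≤ ‖T‖ := by
    simpa [hφ] using T.le_opNorm φ
  have h1 : |(⟪T φ, φ⟫_ℂ).re| ≤ ‖T‖ := by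
    calc |(⟪T φ, φ⟫_ℂ).re| ≤ ‖⟪T φ, φ⟫_ℂ‖ := Complex.abs_re_le_norm _
      _ ≤ ‖T φ‖ * ‖φ‖ := norm_inner_le_norm _ _
      _ ≤ ‖T‖ := by rw [hφ, mul_one]; exact h0
  calc ‖dev T φ‖ ≤ ‖T φ‖ + ‖(((⟪T φ, φ⟫_ℂ).re : ℂ)) • φ‖ := norm_sub_le _ _
    _ = ‖T φ‖ + |(⟪T φ, φ⟫_ℂ).re| := by
        simp [norm_smul, hφ, Complex.norm_real]
    _ ≤ ‖T‖ + ‖T‖ := add_le_add h0 h1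
    _ = 2 * ‖T‖ := by ring

lemma bdd (T : H →L[ℂ] H) (hT : IsSelfAdjoint T) :
    BddAbove (Set.range fun φ : {x : H // ‖x‖ = 1} =>
      Real.sqrt (observableVar T φ)) := by
  refine ⟨2 * ‖T‖, ?_⟩
  rintro _ ⟨φ, rfl⟩
  show Real.sqrt (observableVar T φ.1) ≤ 2 * ‖T‖
  rw [var_eq T hT φ.2, Real.sqrt_sq (norm_nonneg _)]
  exact dev_norm_le T φ.2

lemma sqrt_var_eq (T : H →L[ℂ] H) (hT : IsSelfAdjoint T) {φ : H} (hφ : ‖φ‖ = 1) :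
    Real.sqrt (observableVar T φ) = ‖dev T φ‖ := by
  rw [var_eq T hT hφ, Real.sqrt_sq (norm_nonneg _)]

lemma maxDev_nonneg (T : H →L[ℂ] H) : 0 ≤ maxDev T :=
  Real.iSup_nonneg fun _ => Real.sqrt_nonneg _

end MaxDevAux

open MaxDevAux in
theorem maxDev_is_seminorm :
    (∀ T : H →L[ℂ] H, IsSelfAdjoint T → ∀ c : ℝ, maxDev (c • T) = |c| * maxDev T) ∧
    (∀ T S : H →L[ℂ] H, IsSelfAdjoint T → IsSelfAdjoint S →
      maxDev (T + S) ≤ maxDev T + maxDev S) ∧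
    (∀ T : H →L[ℂ] H, IsSelfAdjoint T →
      (maxDev T = 0 ↔ ∃ c : ℝ, T = c • (1 : H →L[ℂ] H))) := by
  refine ⟨?_, ?_, ?_⟩
  · -- homogeneity
    intro T _ c
    have hvar : ∀ φ : H, observableVar (c • T) φ = c ^ 2 * observableVar T φ := by
      intro φ
      have happ : ∀ x : H, (c • T) x = (c : ℂ) • T x := by
        intro x; rw [ContinuousLinearMap.smul_apply, rsmul]
      rw [observableVar, observableVar, happ, happ, map_smul, smul_smul,
        inner_smul_left, inner_smul_left]
      simp only [map_mul, Complex.conj_ofReal, Complex.mul_re, Complex.ofReal_re,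
        Complex.ofReal_im, Complex.mul_im]
      ring
    unfold maxDev
    rw [Real.mul_iSup_of_nonneg (abs_nonneg c)]
    refine iSup_congr fun φ => ?_
    rw [hvar, Real.sqrt_mul (sq_nonneg c), Real.sqrt_sq_eq_abs]
  · -- subadditivity
    intro T S hT hS
    rcases isEmpty_or_nonempty {x : H // ‖x‖ = 1} with h | h
    · rw [maxDev, Real.iSup_of_isEmpty]
      exact add_nonneg (maxDev_nonneg T) (maxDev_nonneg S)
    · refine Real.iSup_le (fun φ => ?_)
        (add_nonneg (maxDev_nonneg T) (maxDev_nonneg S))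
      rw [sqrt_var_eq (T + S) (hT.add hS) φ.2]
      have hdev : dev (T + S) φ.1 = dev T φ.1 + dev S φ.1 := by
        simp only [dev, ContinuousLinearMap.add_apply, inner_add_left,
          Complex.add_re, Complex.ofReal_add, add_smul]
        abel
      have hTle : ‖dev T φ.1‖ ≤ maxDev T := by
        rw [← sqrt_var_eq T hT φ.2]; exact le_ciSup (bdd T hT) φ
      have hSle : ‖dev S φ.1‖ ≤ maxDev S := by
        rw [← sqrt_var_eq S hS φ.2]; exact le_ciSup (bdd S hS) φ
      calc ‖dev (T + S) φ.1‖ ≤ ‖dev T φ.1‖ + ‖dev S φ.1‖ := by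
            rw [hdev]; exact norm_add_le _ _
        _ ≤ maxDev T + maxDev S := add_le_add hTle hSle
  · -- vanishing
    intro T hT
    constructor
    · intro h0
      -- every unit vector is an eigenvector
      have heig : ∀ φ : H, ‖φ‖ = 1 → T φ = (((⟪T φ, φ⟫_ℂ).re : ℂ)) • φ := by
        intro φ hφ
        have hle : ‖dev T φ‖ ≤ 0 := by
          rw [← sqrt_var_eq T hT hφ, ← h0]
          exact le_ciSup (bdd T hT) ⟨φ, hφ⟩
        have : dev T φ = 0 := norm_le_zero_iff.mp hle
        rw [dev, sub_eq_zero] at this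
        exact this
      -- hence every vector is an eigenvector
      have heig' : ∀ x : H, x ≠ 0 → ∃ d : ℝ, T x = ((d : ℂ)) • x := by
        intro x hx
        set φ : H := ‖x‖⁻¹ • x with hφdef
        have hnx : ‖x‖ ≠ 0 := norm_ne_zero_iff.mpr hx
        have hφ : ‖φ‖ = 1 := by
          rw [hφdef, norm_smul, norm_inv, norm_norm, inv_mul_cancel₀ hnx]
        refine ⟨(⟪T φ, φ⟫_ℂ).re, ?_⟩
        have hx' : x = ‖x‖ • φ := by
          rw [hφdef, smul_inv_smul₀ hnx]
        calc T x = T (‖x‖ • φ) := by rw [← hx']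
          _ = ‖x‖ • T φ := by rw [rsmul ‖x‖ φ, map_smul, ← rsmul]
          _ = ‖x‖ • ((((⟪T φ, φ⟫_ℂ).re : ℂ)) • φ) :=
              congrArg (fun y => ‖x‖ • y) (heig φ hφ)
          _ = (((⟪T φ, φ⟫_ℂ).re : ℂ)) • (‖x‖ • φ) := smul_comm _ _ _
          _ = (((⟪T φ, φ⟫_ℂ).re : ℂ)) • x := by rw [← hx']
      rcases subsingleton_or_nontrivial H with hH | hH
      · exact ⟨0, by ext x; exact Subsingleton.elim _ _⟩
      · obtain ⟨x₀, hx₀⟩ := exists_ne (0 : H)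
        obtain ⟨d₀, hd₀⟩ := heig' x₀ hx₀
        refine ⟨d₀, ?_⟩
        ext x
        simp only [ContinuousLinearMap.smul_apply, ContinuousLinearMap.one_apply]
        rw [rsmul]
        rcases eq_or_ne x 0 with rfl | hx
        · simp
        obtain ⟨d, hd⟩ := heig' x hx
        by_cases hdep : ∃ t : ℂ, x = t • x₀
        · obtain ⟨t, rfl⟩ := hdep
          rw [map_smul, hd₀]
          exact smul_comm t _ x₀
        · have hsum : x + x₀ ≠ 0 := by
            intro hc
            exact hdep ⟨-1, by rw [neg_smul, one_smul, eq_neg_of_add_eq_zero_left hc]⟩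
          obtain ⟨e, he⟩ := heig' (x + x₀) hsum
          rw [map_add, hd, hd₀, smul_add] at he
          have hkey : ((d : ℂ) - e) • x = ((e : ℂ) - d₀) • x₀ := by
            rw [sub_smul, sub_smul, sub_eq_sub_iff_add_eq_add,
              add_comm (((e : ℂ)) • x₀)]
            exact he
          have hde : (d : ℂ) = (e : ℂ) := by
            by_contra hne
            have hsub : (d : ℂ) - e ≠ 0 := sub_ne_zero.mpr hne
            exact hdep ⟨((d : ℂ) - e)⁻¹ * ((e : ℂ) - d₀), by
              rw [← smul_smul, ← hkey, inv_smul_smul₀ hsub]⟩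
          have hed : (e : ℂ) = (d₀ : ℂ) := by
            rw [hde, sub_self, zero_smul] at hkey
            have := (smul_eq_zero.mp hkey.symm).resolve_right hx₀
            exact sub_eq_zero.mp this
          rw [hd, hde, hed]
    · rintro ⟨c, rfl⟩
      refine le_antisymm (Real.iSup_le (fun φ => le_of_eq ?_) le_rfl)
        (maxDev_nonneg _)
      have h0 : observableVar (c • (1 : H →L[ℂ] H)) φ.1 = 0 := by
        have happ : ∀ x : H, (c • (1 : H →L[ℂ] H)) x = (c : ℂ) • x := by
          intro x
          rw [ContinuousLinearMap.smul_apply, ContinuousLinearMap.one_apply, rsmul]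
        have hip : (⟪φ.1, φ.1⟫_ℂ) = 1 := by
          rw [inner_self_eq_norm_sq_to_K, φ.2]
          norm_num
        rw [observableVar]
        simp only [happ, smul_smul, inner_smul_left, hip, Complex.conj_ofReal]
        simp [Complex.conj_ofReal]
        ring
      rw [h0, Real.sqrt_zero]
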